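/- Let n ≥ 3, p ≥ 3, t ∈ (0,1), m > 0, and let Σ be a finite measure space with nonnegative measurable functions f (with f, f^p integrable, not a.e. zero) and h, satisfying: (a) ∫_Σ f dσ = m(n-2)|S^{n-1}|; (b) m^p(n-2)^p|S^{n-1}| ≤ (2m/(1-t²))^{(p-1)(n-1)/(n-2)} ∫_Σ f^p dσ; and (c) (t/(1-t²))·(2/(n-2)) ∫_Σ f^p dσ ≤ (1/(n-1)) ∫_Σ f^{p-1} h dσ. Then the two mass bounds hold: ((1-t²)/2)·K·(|Σ|/|S^{n-1}|)^{(n-2)/(n-1)} ≤ m ≤ ((1-t²)/(2t))·||h/(n-1)||_{L^p_0(Σ)}·(|Σ|/|S^{n-1}|), where K = ( ||f||_{L^1_0(Σ)}/||f||_{L^p_0(Σ)} )^{p(n-2)/((p-1)(n-1))} and ||·||_{L^r_0} denotes the measure-normalized L^r norm. -/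

import Mathlib

open MeasureTheory

/-- The measure-normalized `L^r` norm `||f||_{L^r_0} = ((1/σ(X)) ∫ f^r dσ)^{1/r}`. -/
noncomputable def normLp0 {X : Type*} [MeasurableSpace X] (σ : Measure X)
    (f : X → ℝ) (r : ℝ) : ℝ :=
  ((σ Set.univ).toReal⁻¹ * ∫ x, f x ^ r ∂σ) ^ (1 / r)

lemma memLp_of_int_rpow {X : Type*} [MeasurableSpace X] {σ : Measure X} {f : X → ℝ} {p : ℝ}
    (hp : 0 < p) (hf0 : ∀ x, 0 ≤ f x) (hmeas : AEStronglyMeasurable f σ)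
    (hfp : Integrable (fun x => f x ^ p) σ) : MemLp f (ENNReal.ofReal p) σ := by
  have hq0 : ENNReal.ofReal p ≠ 0 := by simp [ENNReal.ofReal_eq_zero, not_le, hp]
  refine (memLp_norm_rpow_iff (p := ENNReal.ofReal p) hmeas hq0 ENNReal.ofReal_ne_top).mp ?_
  rw [ENNReal.div_self hq0 ENNReal.ofReal_ne_top]
  rw [memLp_one_iff_integrable]
  convert hfp using 2 with x
  rw [ENNReal.toReal_ofReal hp.le, Real.norm_of_nonneg (hf0 x)]

lemma aesm_of_rpow {X : Type*} [MeasurableSpace X] {σ : Measure X} {h : X → ℝ} {p : ℝ}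
    (hp : 0 < p) (hh0 : ∀ x, 0 ≤ h x)
    (hhp : Integrable (fun x => h x ^ p) σ) : AEStronglyMeasurable h σ := by
  have h1 : AEMeasurable (fun x => (h x ^ p) ^ (1/p)) σ :=
    hhp.1.aemeasurable.pow_const (1/p)
  have h2 : (fun x => (h x ^ p) ^ (1/p)) = h := by
    ext x
    rw [← Real.rpow_mul (hh0 x), mul_one_div, div_self hp.ne', Real.rpow_one]
  rw [h2] at h1
  exact h1.aestronglyMeasurable

lemma rpow_sub_one_mul {x : ℝ} (hx : 0 < x) (p : ℝ) : x ^ (p - 1) * x = x ^ p := by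
  have := Real.rpow_add hx (p - 1) 1
  rw [Real.rpow_one, sub_add_cancel] at this
  exact this.symm

set_option maxHeartbeats 1000000 in
/-- Measure-theoretic content of the two-sided mass bound (Theorem 1.5): on a finite measure
space `Σ` with `f = |Du| ≥ 0`, `h = H ≥ 0`, hypotheses (a) `∫f = m(n-2)|S^{n-1}|`,
(b) `m^p(n-2)^p|S^{n-1}| ≤ (2m/(1-t²))^{(p-1)(n-1)/(n-2)}∫f^p`, and
(c) `(t/(1-t²))(2/(n-2))∫f^p ≤ (1/(n-1))∫f^{p-1}h` imply
`((1-t²)/2)·K·(|Σ|/|S^{n-1}|)^{(n-2)/(n-1)} ≤ m ≤ ((1-t²)/(2t))·||h/(n-1)||_{L^p_0}·|Σ|/|S^{n-1}|`,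
with `K = (||f||_{L^1_0}/||f||_{L^p_0})^{p(n-2)/((p-1)(n-1))}`. -/
theorem stmt_18 {X : Type*} [MeasurableSpace X] (σ : Measure X) [IsFiniteMeasure σ]
    (n : ℕ) (hn : 3 ≤ n) (p t m Sn : ℝ) (hp : 3 ≤ p)
    (ht : t ∈ Set.Ioo (0 : ℝ) 1) (hm : 0 < m) (hSn : 0 < Sn)
    (f h : X → ℝ) (hf0 : ∀ x, 0 ≤ f x) (hh0 : ∀ x, 0 ≤ h x)
    (hfi : Integrable f σ) (hfp : Integrable (fun x => f x ^ p) σ)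
    (hhp : Integrable (fun x => h x ^ p) σ)
    (hfh : Integrable (fun x => f x ^ (p - 1) * h x) σ)
    (hfne : ¬ (f =ᵐ[σ] 0))
    (ha : ∫ x, f x ∂σ = m * ((n : ℝ) - 2) * Sn)
    (hb : m ^ p * ((n : ℝ) - 2) ^ p * Sn ≤
      (2 * m / (1 - t ^ 2)) ^ ((p - 1) * ((n : ℝ) - 1) / ((n : ℝ) - 2)) * ∫ x, f x ^ p ∂σ)
    (hc : (t / (1 - t ^ 2)) * (2 / ((n : ℝ) - 2)) * ∫ x, f x ^ p ∂σ ≤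
      (1 / ((n : ℝ) - 1)) * ∫ x, f x ^ (p - 1) * h x ∂σ) :
    ((1 - t ^ 2) / 2) *
        (normLp0 σ f 1 / normLp0 σ f p) ^ (p * ((n : ℝ) - 2) / ((p - 1) * ((n : ℝ) - 1))) *
        ((σ Set.univ).toReal / Sn) ^ (((n : ℝ) - 2) / ((n : ℝ) - 1)) ≤ m ∧
    m ≤ ((1 - t ^ 2) / (2 * t)) * normLp0 σ (fun x => h x / ((n : ℝ) - 1)) p *
        ((σ Set.univ).toReal / Sn) := by
  
  obtain ⟨ht0, ht1⟩ := ht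
  have hn3 : (3:ℝ) ≤ (n:ℝ) := by exact_mod_cast hn
  have hn2 : (0:ℝ) < (n:ℝ) - 2 := by linarith
  have hn1 : (0:ℝ) < (n:ℝ) - 1 := by linarith
  have htt : 0 < 1 - t ^ 2 := by nlinarith
  have hp0 : (0:ℝ) < p := by linarith
  have hp1 : (0:ℝ) < p - 1 := by linarith
  have hpgt1 : (1:ℝ) < p := by linarith
  set V := (σ Set.univ).toReal with hVdef
  set A := ∫ x, f x ∂σ with hAdef
  set B := ∫ x, f x ^ p ∂σ with hBdef
  set D := ∫ x, h x ^ p ∂σ with hDdef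
  set E := ∫ x, f x ^ (p-1) * h x ∂σ with hEdef
  have hApos : 0 < A := by rw [ha]; positivity
  have hV : 0 < V := by
    refine ENNReal.toReal_pos ?_ (measure_ne_top σ _)
    intro h0
    rw [Measure.measure_univ_eq_zero] at h0
    rw [hAdef, h0, integral_zero_measure] at hApos
    exact lt_irrefl _ hApos
  have hRm : 0 < 2 * m / (1 - t ^ 2) := div_pos (by linarith) htt
  have hRpos : 0 < (2 * m / (1 - t ^ 2)) ^ ((p - 1) * ((n : ℝ) - 1) / ((n : ℝ) - 2)) :=
    Real.rpow_pos_of_pos hRm _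
  have hBpos : 0 < B := by
    by_contra hB
    push_neg at hB
    have h1 : 0 < m ^ p * ((n : ℝ) - 2) ^ p * Sn :=
      mul_pos (mul_pos (Real.rpow_pos_of_pos hm p) (Real.rpow_pos_of_pos hn2 p)) hSn
    have h2 := mul_nonpos_of_nonneg_of_nonpos hRpos.le hB
    linarith [hb]
  have hDnn : 0 ≤ D := integral_nonneg fun x => Real.rpow_nonneg (hh0 x) p
  -- Memℒp facts
  have hMf : MemLp f (ENNReal.ofReal p) σ := memLp_of_int_rpow hp0 hf0 hfi.1 hfp
  have hMh : MemLp h (ENNReal.ofReal p) σ :=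
    memLp_of_int_rpow hp0 hh0 (aesm_of_rpow hp0 hh0 hhp) hhp
  have hpq : p.HolderConjugate (p/(p-1)) := Real.HolderConjugate.conjExponent hpgt1
  have hM1 : MemLp (fun _ : X => (1:ℝ)) (ENNReal.ofReal (p/(p-1))) σ := memLp_const 1
  -- Hölder 1 : A ≤ B^(1/p) * V^((p-1)/p)
  have H1 : A ≤ B ^ (1/p) * V ^ ((p-1)/p) := by
    have H := integral_mul_le_Lp_mul_Lq_of_nonneg (μ := σ) hpq (f := f) (g := fun _ => 1)
      (Filter.Eventually.of_forall hf0)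
      (Filter.Eventually.of_forall fun _ => zero_le_one) hMf hM1
    simp only [mul_one, Real.one_rpow, integral_const, smul_eq_mul] at H
    rw [one_div_div] at H
    exact H
  -- Memℒp of f^(p-1)
  have hMfp1 : MemLp (fun x => f x ^ (p-1)) (ENNReal.ofReal (p/(p-1))) σ := by
    have H := hMf.norm_rpow_div (ENNReal.ofReal (p-1))
    have e1 : (fun x : X => ‖f x‖ ^ (ENNReal.ofReal (p-1)).toReal) = fun x => f x ^ (p-1) := by
      funext x
      rw [Real.norm_of_nonneg (hf0 x), ENNReal.toReal_ofReal hp1.le]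
    have e2 : ENNReal.ofReal p / ENNReal.ofReal (p-1) = ENNReal.ofReal (p/(p-1)) :=
      (ENNReal.ofReal_div_of_pos hp1).symm
    rw [e1, e2] at H
    exact H
  -- Hölder 2 : E ≤ B^((p-1)/p) * D^(1/p)
  have H2 : E ≤ B ^ ((p-1)/p) * D ^ (1/p) := by
    have H := integral_mul_le_Lp_mul_Lq_of_nonneg (μ := σ) hpq.symm
      (f := fun x => f x ^ (p-1)) (g := h)
      (Filter.Eventually.of_forall fun x => Real.rpow_nonneg (hf0 x) _)
      (Filter.Eventually.of_forall hh0) hMfp1 hMh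
    have e3 : (fun x => (f x ^ (p-1)) ^ (p/(p-1))) = fun x => f x ^ p := by
      funext x
      rw [← Real.rpow_mul (hf0 x)]
      congr 1
      field_simp
    rw [show ∫ x, (f x ^ (p-1)) ^ (p/(p-1)) ∂σ = B by rw [hBdef]; exact congrArg _ e3,
      one_div_div] at H
    exact H
  -- abbreviations
  set b := B ^ (1/p) with hbdef
  set d := D ^ (1/p) with hddef
  set v := V ^ (1/p) with hvdef
  have hbp : 0 < b := Real.rpow_pos_of_pos hBpos _
  have hv : 0 < v := Real.rpow_pos_of_pos hV _
  have hd : 0 ≤ d := Real.rpow_nonneg hDnn _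
  have hVsplit : V ^ ((p-1)/p) = V / v := by
    rw [show (p-1)/p = 1 - 1/p by field_simp, Real.rpow_sub hV, Real.rpow_one]
  have hBsplit : B ^ ((p-1)/p) * b = B := by
    rw [hbdef, ← Real.rpow_add hBpos]
    rw [show (p-1)/p + 1/p = 1 by field_simp; ring, Real.rpow_one]
  have hBq : 0 < B ^ ((p-1)/p) := Real.rpow_pos_of_pos hBpos _
  -- key2
  have key2 : (t / (1 - t ^ 2)) * (2 / ((n:ℝ) - 2)) * b ≤ (1/((n:ℝ)-1)) * d := by
    refine le_of_mul_le_mul_left ?_ hBq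
    calc B ^ ((p-1)/p) * ((t / (1 - t ^ 2)) * (2 / ((n:ℝ) - 2)) * b)
        = (t / (1 - t ^ 2)) * (2 / ((n:ℝ) - 2)) * (B ^ ((p-1)/p) * b) := by ring
      _ = (t / (1 - t ^ 2)) * (2 / ((n:ℝ) - 2)) * B := by rw [hBsplit]
      _ ≤ (1/((n:ℝ)-1)) * E := hc
      _ ≤ (1/((n:ℝ)-1)) * (B ^ ((p-1)/p) * d) :=
          mul_le_mul_of_nonneg_left H2 (by positivity)
      _ = B ^ ((p-1)/p) * ((1/((n:ℝ)-1)) * d) := by ring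
  constructor
  · -- lower bound
    set α := (p-1) * ((n:ℝ)-1) / ((n:ℝ)-2) with hαdef
    have hα : 0 < α := div_pos (mul_pos hp1 hn1) hn2
    set G := A ^ p / (Sn ^ (p-1) * B) with hGdef
    have hSp : 0 < Sn ^ (p-1) := Real.rpow_pos_of_pos hSn _
    have hGpos : 0 < G := div_pos (Real.rpow_pos_of_pos hApos _) (mul_pos hSp hBpos)
    have hGle : G ≤ (2 * m / (1 - t ^ 2)) ^ α := by
      rw [hGdef, div_le_iff₀ (mul_pos hSp hBpos)]
      have hAp : A ^ p = m ^ p * ((n:ℝ)-2) ^ p * Sn ^ p := by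
        rw [ha, Real.mul_rpow (by positivity) hSn.le, Real.mul_rpow hm.le hn2.le]
      rw [hAp, ← rpow_sub_one_mul hSn p]
      calc m ^ p * ((n:ℝ)-2) ^ p * (Sn ^ (p-1) * Sn)
          = Sn ^ (p-1) * (m ^ p * ((n:ℝ)-2) ^ p * Sn) := by ring
        _ ≤ Sn ^ (p-1) * ((2 * m / (1 - t ^ 2)) ^ α * B) :=
            mul_le_mul_of_nonneg_left hb hSp.le
        _ = (2 * m / (1 - t ^ 2)) ^ α * (Sn ^ (p-1) * B) := by ring
    have hroot : G ^ (1/α) ≤ 2 * m / (1 - t ^ 2) := by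
      calc G ^ (1/α) ≤ ((2 * m / (1 - t ^ 2)) ^ α) ^ (1/α) :=
            Real.rpow_le_rpow hGpos.le hGle (by positivity)
        _ = 2 * m / (1 - t ^ 2) := by
            rw [← Real.rpow_mul hRm.le, mul_one_div, div_self hα.ne', Real.rpow_one]
    -- identify LHS with ((1-t^2)/2) * G^(1/α)
    have hN1 : normLp0 σ f 1 = V⁻¹ * A := by
      rw [normLp0]
      simp [Real.rpow_one]
      rfl
    have hNp : normLp0 σ f p = (V⁻¹ * B) ^ (1/p) := by rw [normLp0]
    have hIBpos : 0 < V⁻¹ * B := mul_pos (inv_pos.mpr hV) hBpos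
    have hxpos : 0 < (V⁻¹ * A) / ((V⁻¹ * B) ^ (1/p)) :=
      div_pos (mul_pos (inv_pos.mpr hV) hApos) (Real.rpow_pos_of_pos hIBpos _)
    have e1 : p * ((n:ℝ)-2) / ((p-1) * ((n:ℝ)-1)) = p * (1/α) := by
      rw [hαdef]; field_simp
    have e2 : ((n:ℝ)-2) / ((n:ℝ)-1) = (p-1) * (1/α) := by
      rw [hαdef]; field_simp
    have hprod : ((V⁻¹ * A) / ((V⁻¹ * B) ^ (1/p))) ^ p * (V / Sn) ^ (p-1) = G := by
      rw [Real.div_rpow (mul_pos (inv_pos.mpr hV) hApos).le (Real.rpow_nonneg hIBpos.le _),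
        ← Real.rpow_mul hIBpos.le, one_div_mul_cancel hp0.ne', Real.rpow_one,
        Real.mul_rpow (inv_nonneg.mpr hV.le) hApos.le,
        Real.inv_rpow hV.le,
        Real.div_rpow hV.le hSn.le, hGdef]
      rw [← rpow_sub_one_mul hV p]
      have h1 : V ^ (p-1) ≠ 0 := (Real.rpow_pos_of_pos hV _).ne'
      have h2 : Sn ^ (p-1) ≠ 0 := (Real.rpow_pos_of_pos hSn _).ne'
      field_simp
    have hLHS : (normLp0 σ f 1 / normLp0 σ f p) ^ (p * ((n:ℝ)-2) / ((p-1) * ((n:ℝ)-1))) *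
        (V / Sn) ^ (((n:ℝ)-2) / ((n:ℝ)-1)) = G ^ (1/α) := by
      rw [hN1, hNp, e1, e2, Real.rpow_mul hxpos.le, Real.rpow_mul (div_nonneg hV.le hSn.le),
        ← Real.mul_rpow (Real.rpow_nonneg hxpos.le _)
          (Real.rpow_nonneg (div_nonneg hV.le hSn.le) _), hprod]
    rw [mul_assoc, hLHS]
    calc (1 - t ^ 2) / 2 * G ^ (1/α) ≤ (1 - t ^ 2) / 2 * (2 * m / (1 - t ^ 2)) :=
          mul_le_mul_of_nonneg_left hroot (by positivity)
      _ = m := by field_simp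
  · -- upper bound
    have hnorm : normLp0 σ (fun x => h x / ((n:ℝ)-1)) p = d / (v * ((n:ℝ)-1)) := by
      rw [normLp0]
      have hint : ∫ x, (h x / ((n:ℝ)-1)) ^ p ∂σ = D / ((n:ℝ)-1) ^ p := by
        simp_rw [Real.div_rpow (hh0 _) hn1.le]
        rw [integral_div, hDdef]
      rw [hint, show V⁻¹ * (D / ((n:ℝ)-1) ^ p) = D / (V * ((n:ℝ)-1) ^ p) by ring,
        Real.div_rpow hDnn (by positivity),
        Real.mul_rpow hV.le (Real.rpow_nonneg hn1.le _),
        ← Real.rpow_mul hn1.le, mul_one_div, div_self hp0.ne', Real.rpow_one]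
    have e1 : m * (((n:ℝ)-2) * Sn) * v ≤ b * V := by
      have h1 : A ≤ b * (V / v) := by rw [← hVsplit]; exact H1
      have h2 := mul_le_mul_of_nonneg_right h1 hv.le
      rw [ha] at h2
      calc m * (((n:ℝ)-2) * Sn) * v = m * ((n:ℝ)-2) * Sn * v := by ring
        _ ≤ b * (V / v) * v := h2
        _ = b * V := by rw [mul_assoc, div_mul_cancel₀ _ hv.ne']
    have e2 : 2 * t * ((n:ℝ)-1) * b ≤ (1 - t^2) * ((n:ℝ)-2) * d := by
      have k2 : (2 * t * b) / ((1 - t^2) * ((n:ℝ)-2)) ≤ d / ((n:ℝ)-1) := by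
        calc (2 * t * b) / ((1 - t^2) * ((n:ℝ)-2))
            = (t / (1 - t ^ 2)) * (2 / ((n:ℝ) - 2)) * b := by
              field_simp
          _ ≤ (1/((n:ℝ)-1)) * d := key2
          _ = d / ((n:ℝ)-1) := by ring
      rw [div_le_div_iff₀ (mul_pos htt hn2) hn1] at k2
      nlinarith [k2]
    have hkey3 : m * (2 * t * ((n:ℝ)-1) * v * Sn) ≤ (1 - t^2) * d * V := by
      nlinarith [mul_le_mul_of_nonneg_left e1 (by positivity : (0:ℝ) ≤ 2 * t * ((n:ℝ)-1)),
        mul_le_mul_of_nonneg_right e2 hV.le, hn2]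
    rw [hnorm, show ((1 - t^2) / (2*t)) * (d / (v * ((n:ℝ)-1))) * (V / Sn)
        = ((1 - t^2) * d * V) / (2 * t * ((n:ℝ)-1) * v * Sn) by
      field_simp [ht0.ne', hv.ne', hSn.ne', hn1.ne']]
    rw [le_div_iff₀ (by positivity)]
    nlinarith [hkey3]
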